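/- Let n ≥ 2 and let a_1, …, a_n be positive real numbers. An n×n matrix M is a rank-one matrix in the standard simplex Δ^{nn−1} with m_{ii} = a_i for all i if and only if there exists a vector u ∈ ℝ^n with u_i > 0 for all i, ∑_{i=1}^n u_i = 1 and ∑_{i=1}^n a_i/u_i = 1 such that m_{ij} = u_i · (a_j/u_j) for all i, j. -/

import Mathlib

/-- All 2×2 minors of a rank-one matrix vanish. -/
lemma rank_one_minors {n : ℕ} (M : Matrix (Fin n) (Fin n) ℝ) (h : M.rank = 1) :
    ∀ i j k l, M i j * M k l = M i l * M k j := by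
  rw [Matrix.rank_eq_finrank_span_row] at h
  obtain ⟨v, -, hv⟩ := finrank_eq_one_iff'.mp h
  have key : ∀ i, ∃ c : ℝ, ∀ j, M i j = c * (v : Fin n → ℝ) j := by
    intro i
    obtain ⟨c, hc⟩ := hv ⟨M i, Submodule.subset_span (Set.mem_range_self i)⟩
    refine ⟨c, fun j => ?_⟩
    have := congrArg (fun w : (Submodule.span ℝ (Set.range M)) => (w : Fin n → ℝ) j) hc
    simpa using this.symm
  intro i j k l
  obtain ⟨c, hc⟩ := key i
  obtain ⟨d, hd⟩ := key k
  rw [hc, hd, hc, hd]; ring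

theorem completion_characterization (n : ℕ) (hn : 2 ≤ n) (a : Fin n → ℝ)
    (ha : ∀ i, 0 < a i) (M : Matrix (Fin n) (Fin n) ℝ) :
    ((∀ i j, 0 ≤ M i j) ∧ (∑ i, ∑ j, M i j = 1) ∧ M.rank = 1 ∧ (∀ i, M i i = a i)) ↔
    (∃ u : Fin n → ℝ, (∀ i, 0 < u i) ∧ (∑ i, u i = 1) ∧ (∑ i, a i / u i = 1) ∧
      ∀ i j, M i j = u i * (a j / u j)) := by
  have i0 : Fin n := ⟨0, by omega⟩
  constructor
  · rintro ⟨hpos, hsum, hrank, hdiag⟩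
    set u : Fin n → ℝ := fun i => ∑ j, M i j with hu
    have hupos : ∀ i, 0 < u i := by
      intro i
      have h1 : M i i ≤ u i := Finset.single_le_sum (fun j _ => hpos i j) (Finset.mem_univ i)
      have := ha i
      rw [hdiag i] at h1
      linarith
    have hminor := rank_one_minors M hrank
    have hkey : ∀ i j, M i j * u j = u i * a j := by
      intro i j
      calc M i j * u j = ∑ l, M i j * M j l := by rw [Finset.mul_sum]
        _ = ∑ l, M i l * M j j := by
            apply Finset.sum_congr rfl; intro l _; exact hminor i j j l
        _ = u i * a j := by rw [← Finset.sum_mul, hdiag j]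
    have hform : ∀ i j, M i j = u i * (a j / u j) := by
      intro i j
      rw [← mul_div_assoc, eq_div_iff (hupos j).ne']
      exact hkey i j
    refine ⟨u, hupos, hsum, ?_, hform⟩
    have : ∑ j, a j / u j = ∑ j, M i0 j / u i0 := by
      apply Finset.sum_congr rfl
      intro j _
      rw [hform i0 j, mul_div_cancel_left₀ _ (hupos i0).ne']
    rw [this, ← Finset.sum_div]
    exact div_self (ne_of_gt (hupos i0))
  · rintro ⟨u, hupos, husum, hasum, hform⟩
    have hvne : (fun j => a j / u j) ≠ (0 : Fin n → ℝ) := by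
      intro h
      have := congrFun h i0
      simp only [Pi.zero_apply] at this
      exact absurd this (ne_of_gt (div_pos (ha i0) (hupos i0)))
    refine ⟨fun i j => by
        rw [hform i j]
        exact mul_nonneg (hupos i).le (div_nonneg (ha j).le (hupos j).le),
      ?_, ?_, fun i => by rw [hform i i, mul_comm, div_mul_cancel₀ _ (hupos i).ne']⟩
    · calc ∑ i, ∑ j, M i j = ∑ i, u i * ∑ j, a j / u j := by
            apply Finset.sum_congr rfl
            intro i _
            rw [Finset.mul_sum]
            exact Finset.sum_congr rfl fun j _ => hform i j
        _ = 1 := by rw [hasum]; simpa using husum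
    · have hspan : Submodule.span ℝ (Set.range M) =
          Submodule.span ℝ {(fun j => a j / u j : Fin n → ℝ)} := by
        apply le_antisymm
        · rw [Submodule.span_le]
          rintro _ ⟨i, rfl⟩
          have : M i = u i • (fun j => a j / u j : Fin n → ℝ) := by
            funext j; simp [hform i j]
          rw [this]
          exact Submodule.smul_mem _ _ (Submodule.subset_span rfl)
        · rw [Submodule.span_le]
          rintro _ rfl
          have : (fun j => a j / u j : Fin n → ℝ) = (u i0)⁻¹ • M i0 := by
            funext j
            simp only [Pi.smul_apply, smul_eq_mul, hform i0 j, ← mul_assoc,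
              inv_mul_cancel₀ (hupos i0).ne', one_mul]
          rw [this]
          exact Submodule.smul_mem _ _ (Submodule.subset_span (Set.mem_range_self i0))
      rw [Matrix.rank_eq_finrank_span_row, show Set.range M.row = Set.range M from rfl, hspan]
      exact finrank_span_singleton hvne
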